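/- If X is a connected weakly orderable Tychonoff space (i.e., there is a continuous injection of X into a linearly ordered compact connected Hausdorff space), then βX is an irreducible continuum: there exist points p, q ∈ βX such that the only subcontinuum of βX containing both p and q is βX itself. -/
import Mathlib

open Set Filter Topology

/-- If `X` is a connected weakly orderable Tychonoff space (there is a continuous injection
of `X` into a compact connected linearly ordered Hausdorff space), then `βX` is an
irreducible continuum: there are `p, q ∈ βX` such that the only subcontinuum of `βX`
containing both is `βX` itself. -/
theorem stmt_8 {X : Type*} [TopologicalSpace X] [T35Space X] [ConnectedSpace X]
    (hwo : ∃ (Y : Type) (_ : TopologicalSpace Y) (_ : LinearOrder Y),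
      OrderTopology Y ∧ CompactSpace Y ∧ ConnectedSpace Y ∧ T2Space Y ∧
      ∃ f : X → Y, Continuous f ∧ Function.Injective f) :
    ∃ p q : StoneCech X, ∀ K : Set (StoneCech X),
      IsClosed K → IsPreconnected K → p ∈ K → q ∈ K → K = Set.univ := by
  obtain ⟨Y, _iY, _oY, hOT, hCS, _hCY, hT2, f, hf, hfi⟩ := hwo
  haveI := hOT; haveI := hCS; haveI := hT2
  set u : X → StoneCech X := stoneCechUnit with hu
  set F : StoneCech X → Y := stoneCechExtend hf with hFdef
  have hFc : Continuous F := continuous_stoneCechExtend hf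
  have hFu : ∀ t, F (u t) = f t := fun t => congrFun (stoneCechExtend_extends hf) t
  set S := closure (Set.range f) with hSdef
  have hSne : S.Nonempty := (Set.range_nonempty f).closure
  have hScpt : IsCompact S := isClosed_closure.isCompact
  obtain ⟨a, ha⟩ := hScpt.exists_isLeast hSne
  obtain ⟨b, hb⟩ := hScpt.exists_isGreatest hSne
  have hfa : ∀ t, a ≤ f t := fun t => ha.2 (subset_closure ⟨t, rfl⟩)
  have hfb : ∀ t, f t ≤ b := fun t => hb.2 (subset_closure ⟨t, rfl⟩)
  have hSF : S ⊆ Set.range F := by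
    apply closure_minimal _ (isCompact_range hFc).isClosed
    rintro _ ⟨t, rfl⟩; exact ⟨u t, hFu t⟩
  have hp : ∃ p, F p = a ∧ ∀ x, f x = a → p = u x := by
    by_cases h : ∃ x, f x = a
    · obtain ⟨x0, hx0⟩ := h
      exact ⟨u x0, by rw [hFu, hx0], fun x hx => by rw [hfi (hx0.trans hx.symm)]⟩
    · obtain ⟨p, hpF⟩ := hSF ha.1
      exact ⟨p, hpF, fun x hx => absurd ⟨x, hx⟩ h⟩
  have hq : ∃ q, F q = b ∧ ∀ x, f x = b → q = u x := by
    by_cases h : ∃ x, f x = b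
    · obtain ⟨x0, hx0⟩ := h
      exact ⟨u x0, by rw [hFu, hx0], fun x hx => by rw [hfi (hx0.trans hx.symm)]⟩
    · obtain ⟨q, hqF⟩ := hSF hb.1
      exact ⟨q, hqF, fun x hx => absurd ⟨x, hx⟩ h⟩
  obtain ⟨p, hpF, hpx⟩ := hp
  obtain ⟨q, hqF, hqx⟩ := hq
  -- helper: closure point inside an open set is a closure point of the intersection
  have mem_cl_inter : ∀ {s O : Set (StoneCech X)} {w : StoneCech X},
      IsOpen O → w ∈ O → w ∈ closure s → w ∈ closure (s ∩ O) := by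
    intro s O w hO hwO hws
    rw [mem_closure_iff] at hws ⊢
    intro V hV hwV
    obtain ⟨y, ⟨hy1, hy2⟩, hy3⟩ := hws (V ∩ O) (hV.inter hO) ⟨hwV, hwO⟩
    exact ⟨y, hy1, hy3, hy2⟩
  -- the crux lemma: the closures of the images of the two open rays at `x`
  -- can only meet at `u x`.
  have crux : ∀ x : X, ∀ z : StoneCech X,
      z ∈ closure (u '' (f ⁻¹' (Set.Iio (f x)))) →
      z ∈ closure (u '' (f ⁻¹' (Set.Ioi (f x)))) → z = u x := by
    intro x z hzA hzB
    by_contra hne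
    obtain ⟨Φ, hΦ0, hΦ1, hΦI⟩ := exists_continuous_zero_one_of_isClosed
      (isClosed_singleton (x := z)) (isClosed_singleton (x := u x))
      (by simpa [Set.disjoint_singleton] using hne)
    set φ : X → ℝ := fun t => Φ (u t) with hφdef
    have hφc : Continuous φ := Φ.continuous.comp continuous_stoneCechUnit
    have hφx : φ x = 1 := hΦ1 rfl
    set ρ : X → ℝ := fun t => max 0 (1 - 2 * φ t) with hρdef
    have hρc : Continuous ρ := continuous_const.max (by fun_prop)
    have hρ0 : ∀ t, 0 ≤ ρ t := fun t => le_max_left _ _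
    set g : X → ℝ := fun t => if f x < f t then 1 else 0 with hgdef
    set h : X → ℝ := fun t => ρ t * g t with hhdef
    have hg01 : ∀ t, 0 ≤ g t ∧ g t ≤ 1 := by
      intro t; by_cases hc : f x < f t <;> simp [hgdef, hc]
    have hh0 : ∀ t, 0 ≤ h t := fun t => mul_nonneg (hρ0 t) (hg01 t).1
    have hhρ : ∀ t, h t ≤ ρ t := fun t => by
      calc ρ t * g t ≤ ρ t * 1 := mul_le_mul_of_nonneg_left (hg01 t).2 (hρ0 t)
      _ = ρ t := mul_one _
    have hhc : Continuous h := by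
      rw [continuous_iff_continuousAt]
      intro t0
      rcases lt_trichotomy (f t0) (f x) with hlt | heq | hgt
      · have hev : h =ᶠ[𝓝 t0] fun _ => (0:ℝ) := by
          filter_upwards [(isOpen_Iio.preimage hf).mem_nhds hlt] with t ht
          have hnt : ¬ f x < f t := not_lt.mpr (le_of_lt ht)
          simp [hhdef, hgdef, hnt]
        exact continuousAt_const.congr hev.symm
      · -- t0 = x
        have ht0 : t0 = x := hfi heq
        subst ht0
        have hρ0' : ρ t0 = 0 := by
          simp only [hρdef]
          rw [hφx]
          norm_num
        have hh0' : h t0 = 0 := by simp [hhdef, hρ0']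
        rw [ContinuousAt, hh0']
        have hρt : Tendsto ρ (𝓝 t0) (𝓝 0) := by
          have := hρc.continuousAt (x := t0)
          rwa [ContinuousAt, hρ0'] at this
        exact squeeze_zero hh0 hhρ hρt
      · have hev : h =ᶠ[𝓝 t0] ρ := by
          filter_upwards [(isOpen_Ioi.preimage hf).mem_nhds hgt] with t ht
          have hgt' : f x < f t := ht
          simp [hhdef, hgdef, hgt']
        exact hρc.continuousAt.congr hev.symm
    -- move into the open set where Φ < 1/4
    have hzO : z ∈ Φ ⁻¹' (Set.Iio (1/4 : ℝ)) := by
      have h0 : Φ z = 0 := hΦ0 rfl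
      simp only [Set.mem_preimage, Set.mem_Iio, h0]
      norm_num
    have hOopen : IsOpen (Φ ⁻¹' (Set.Iio (1/4 : ℝ))) := isOpen_Iio.preimage Φ.continuous
    have hzA' : z ∈ closure (u '' {t | f t < f x ∧ φ t < 1/4}) := by
      refine closure_mono ?_ (mem_cl_inter hOopen hzO hzA)
      rintro w ⟨⟨t, ht, rfl⟩, hwO⟩
      exact ⟨t, ⟨ht, hwO⟩, rfl⟩
    have hzB' : z ∈ closure (u '' {t | f x < f t ∧ φ t < 1/4}) := by
      refine closure_mono ?_ (mem_cl_inter hOopen hzO hzB)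
      rintro w ⟨⟨t, ht, rfl⟩, hwO⟩
      exact ⟨t, ⟨ht, hwO⟩, rfl⟩
    -- extend the separating function to βX
    set h' : X → Set.Icc (0:ℝ) 1 := fun t => Set.projIcc 0 1 zero_le_one (h t) with hh'def
    have hh'c : Continuous h' := continuous_projIcc.comp hhc
    haveI : CompactSpace (Set.Icc (0:ℝ) 1) := isCompact_iff_compactSpace.mp isCompact_Icc
    set H : StoneCech X → Set.Icc (0:ℝ) 1 := stoneCechExtend hh'c with hHdef
    set G : StoneCech X → ℝ := fun w => (H w : ℝ) with hGdef
    have hGc : Continuous G := continuous_subtype_val.comp (continuous_stoneCechExtend hh'c)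
    have hGu : ∀ t, G (u t) = max 0 (min 1 (h t)) := by
      intro t
      have : H (u t) = h' t := congrFun (stoneCechExtend_extends hh'c) t
      rw [hGdef]; simp only [this, hh'def, Set.coe_projIcc]
    -- on the left set, G ∘ u = 0
    have hGA : Set.MapsTo G (u '' {t | f t < f x ∧ φ t < 1/4}) (Set.Iic (0:ℝ)) := by
      rintro w ⟨t, ⟨ht1, _⟩, rfl⟩
      have hg0 : g t = 0 := by simp [hgdef, not_lt.mpr (le_of_lt ht1)]
      have : h t = 0 := by simp [hhdef, hg0]
      simp [hGu t, this]
    -- on the right set, G ∘ u ≥ 1/2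
    have hGB : Set.MapsTo G (u '' {t | f x < f t ∧ φ t < 1/4}) (Set.Ici (1/2 : ℝ)) := by
      rintro w ⟨t, ⟨ht1, ht2⟩, rfl⟩
      have hg1 : g t = 1 := by simp [hgdef, ht1]
      have hρhalf : (1/2 : ℝ) ≤ ρ t := by
        have : (1/2 : ℝ) ≤ 1 - 2 * φ t := by linarith
        exact this.trans (le_max_right _ _)
      have hhhalf : (1/2 : ℝ) ≤ h t := by
        rw [hhdef]; simpa [hg1] using hρhalf
      have : (1/2 : ℝ) ≤ max 0 (min 1 (h t)) := by
        refine le_trans ?_ (le_max_right _ _)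
        exact le_min (by norm_num) hhhalf
      simpa [hGu t] using this
    have h1 : G z ∈ Set.Iic (0:ℝ) := by
      have := map_mem_closure hGc hzA' hGA
      rwa [isClosed_Iic.closure_eq] at this
    have h2 : G z ∈ Set.Ici (1/2 : ℝ) := by
      have := map_mem_closure hGc hzB' hGB
      rwa [isClosed_Ici.closure_eq] at this
    have : (1/2 : ℝ) ≤ 0 := le_trans h2 h1
    norm_num at this
  refine ⟨p, q, fun K hKcl hKpc hpK hqK => ?_⟩
  have hsub : Set.range u ⊆ K := by
    rintro _ ⟨x, rfl⟩
    rcases eq_or_lt_of_le (hfa x) with hax | hax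
    · rw [← hpx x hax.symm]; exact hpK
    rcases eq_or_lt_of_le (hfb x) with hbx | hbx
    · rw [← hqx x hbx]; exact hqK
    set c := f x with hcdef
    set L := closure (u '' (f ⁻¹' (Set.Iic c))) with hLdef
    set R := closure (u '' (f ⁻¹' (Set.Ici c))) with hRdef
    have hLR : L ∪ R = Set.univ := by
      rw [hLdef, hRdef, ← closure_union, ← Set.image_union, ← Set.preimage_union,
        Set.Iic_union_Ici, Set.preimage_univ, Set.image_univ]
      exact denseRange_stoneCechUnit.closure_eq
    have hFL : ∀ w ∈ L, F w ≤ c := by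
      intro w hwL
      have hmt : Set.MapsTo F (u '' (f ⁻¹' (Set.Iic c))) (Set.Iic c) := by
        rintro _ ⟨t, ht, rfl⟩; simpa [hFu t] using ht
      have := map_mem_closure hFc hwL hmt
      rwa [isClosed_Iic.closure_eq] at this
    have hFR : ∀ w ∈ R, c ≤ F w := by
      intro w hwR
      have hmt : Set.MapsTo F (u '' (f ⁻¹' (Set.Ici c))) (Set.Ici c) := by
        rintro _ ⟨t, ht, rfl⟩; simpa [hFu t] using ht
      have := map_mem_closure hFc hwR hmt
      rwa [isClosed_Ici.closure_eq] at this
    have hpL : p ∈ L := by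
      rcases (hLR ▸ Set.mem_univ p : p ∈ L ∪ R) with h | h
      · exact h
      · exact absurd (hFR p h) (by rw [hpF]; exact not_le.mpr hax)
    have hqR : q ∈ R := by
      rcases (hLR ▸ Set.mem_univ q : q ∈ L ∪ R) with h | h
      · exact absurd (hFL q h) (by rw [hqF]; exact not_le.mpr hbx)
      · exact h
    have hqnL : q ∉ L := fun h => absurd (hFL q h) (by rw [hqF]; exact not_le.mpr hbx)
    have hpnR : p ∉ R := fun h => absurd (hFR p h) (by rw [hpF]; exact not_le.mpr hax)
    have hKLR : (K ∩ (L ∩ R)).Nonempty := by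
      by_contra hemp
      rw [Set.not_nonempty_iff_eq_empty] at hemp
      have h1 : K ⊆ Lᶜ ∪ Rᶜ := by
        intro w hw
        by_contra hcon
        simp only [Set.mem_union, Set.mem_compl_iff, not_or, not_not] at hcon
        have hmem : w ∈ K ∩ (L ∩ R) := ⟨hw, hcon.1, hcon.2⟩
        rw [hemp] at hmem
        exact absurd hmem (Set.notMem_empty w)
      have hne := hKpc Lᶜ Rᶜ isClosed_closure.isOpen_compl isClosed_closure.isOpen_compl
        h1 ⟨q, hqK, hqnL⟩ ⟨p, hpK, hpnR⟩
      obtain ⟨w, _, hwL, hwR⟩ := hne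
      have : w ∈ L ∪ R := hLR ▸ Set.mem_univ w
      rcases this with h | h
      · exact hwL h
      · exact hwR h
    obtain ⟨w, hwK, hwL, hwR⟩ := hKLR
    have hsplitIic : f ⁻¹' (Set.Iic c) = f ⁻¹' (Set.Iio c) ∪ {x} := by
      ext t
      simp only [Set.mem_preimage, Set.mem_Iic, Set.mem_union, Set.mem_Iio,
        Set.mem_singleton_iff]
      constructor
      · intro ht
        rcases lt_or_eq_of_le ht with h | h
        · exact Or.inl h
        · exact Or.inr (hfi h)
      · rintro (h | rfl)
        · exact le_of_lt h
        · exact le_refl _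
    have hsplitIci : f ⁻¹' (Set.Ici c) = f ⁻¹' (Set.Ioi c) ∪ {x} := by
      ext t
      simp only [Set.mem_preimage, Set.mem_Ici, Set.mem_union, Set.mem_Ioi,
        Set.mem_singleton_iff]
      constructor
      · intro ht
        rcases lt_or_eq_of_le ht with h | h
        · exact Or.inl h
        · exact Or.inr (hfi h.symm)
      · rintro (h | rfl)
        · exact le_of_lt h
        · exact le_refl _
    have hwL' : w = u x ∨ w ∈ closure (u '' (f ⁻¹' (Set.Iio c))) := by
      rw [hLdef, hsplitIic, Set.image_union, Set.image_singleton, closure_union,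
        closure_singleton] at hwL
      rcases hwL with h | h
      · exact Or.inr h
      · exact Or.inl h
    have hwR' : w = u x ∨ w ∈ closure (u '' (f ⁻¹' (Set.Ioi c))) := by
      rw [hRdef, hsplitIci, Set.image_union, Set.image_singleton, closure_union,
        closure_singleton] at hwR
      rcases hwR with h | h
      · exact Or.inr h
      · exact Or.inl h
    have hwx : w = u x := by
      rcases hwL' with h | hA
      · exact h
      rcases hwR' with h | hB
      · exact h
      exact crux x w hA hB
    rw [← hwx]; exact hwK
  have hcl : closure (Set.range u) ⊆ K := closure_minimal hsub hKcl
  rw [denseRange_stoneCechUnit.closure_eq] at hcl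
  exact Set.eq_univ_of_univ_subset hcl
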